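/- The curvature d-tensor S^l_{ijk} of the rheonomic Berwald–Moór metric has the following values (no summation over repeated indices): (1) S^l_{ijk} = 0 when i, j, k, l are pairwise distinct; (2) S^l_{iik} = −(1/16)·y_l/((y_i)²·y_k) when i, k, l are pairwise distinct; (3) S^l_{iji} = (1/16)·y_l/((y_i)²·y_j) when i, j, l are pairwise distinct; (4) S^i_{ijk} = 0 when i, j, k are pairwise distinct; (5) S^l_{ilk} = 1/(16·y_i·y_k) when i, k, l are pairwise distinct; (6) S^l_{ijl} = −1/(16·y_i·y_j) when i, j, l are pairwise distinct; (7) S^l_{iil} = 1/(8·(y_i)²) when i ≠ l; (8) S^l_{ili} = −1/(8·(y_i)²) when i ≠ l; (9) S^l_{llk} = 0 when k ≠ l; (10) S^l_{ljl} = 0 when j ≠ l. -/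

import Mathlib

set_option maxHeartbeats 0

/-- Partial derivative of a function of `y : Fin 4 → ℝ` with respect to the
`k`-th component, evaluated at `y`. -/
noncomputable def pd (f : (Fin 4 → ℝ) → ℝ) (k : Fin 4) (y : Fin 4 → ℝ) : ℝ :=
  deriv (fun s => f (Function.update y k s)) (y k)

lemma fin4_cases (l : Fin 4) : l = 0 ∨ l = 1 ∨ l = 2 ∨ l = 3 := by omega

lemma hasDerivAt_aux (a : ℝ) (u v w : ℝ → ℝ) {x du dv dw : ℝ}
    (hu : HasDerivAt u du x) (hv : HasDerivAt v dv x) (hw : HasDerivAt w dw x)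
    (h : v x * w x ≠ 0) :
    HasDerivAt (fun s => a * u s / (v s * w s))
      (a * (du * (v x * w x) - u x * (dv * w x + v x * dw)) / (v x * w x) ^ 2) x := by
  have h1 := (hu.const_mul a).fun_div (hv.fun_mul hw) h
  refine h1.congr_deriv ?_
  ring

lemma pd_C_eq (y : Fin 4 → ℝ) (hy : ∀ i, 0 < y i)
    (A : Fin 4 → Fin 4 → Fin 4 → ℝ)
    (C : Fin 4 → Fin 4 → Fin 4 → (Fin 4 → ℝ) → ℝ)
    (hC : ∀ i j k z, C i j k z = A i j k * z i / (z j * z k))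
    (l i j k : Fin 4) :
    pd (C l i j) k y =
      A l i j * ((if l = k then (1:ℝ) else 0) * (y i * y j)
        - y l * ((if i = k then (1:ℝ) else 0) * y j + y i * (if j = k then (1:ℝ) else 0)))
        / (y i * y j) ^ 2 := by
  unfold pd
  have hfun : (fun s => C l i j (Function.update y k s)) =
      fun s => A l i j * (if l = k then s else y l) /
        ((if i = k then s else y i) * (if j = k then s else y j)) := by
    funext s; rw [hC]; simp [Function.update_apply]
  rw [hfun]
  have hu : HasDerivAt (fun s : ℝ => if l = k then s else y l)
      (if l = k then (1:ℝ) else 0) (y k) := by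
    split_ifs with h
    · exact hasDerivAt_id _
    · exact hasDerivAt_const _ _
  have hv : HasDerivAt (fun s : ℝ => if i = k then s else y i)
      (if i = k then (1:ℝ) else 0) (y k) := by
    split_ifs with h
    · exact hasDerivAt_id _
    · exact hasDerivAt_const _ _
  have hw : HasDerivAt (fun s : ℝ => if j = k then s else y j)
      (if j = k then (1:ℝ) else 0) (y k) := by
    split_ifs with h
    · exact hasDerivAt_id _
    · exact hasDerivAt_const _ _
  have e1 : (if l = k then y k else y l) = y l := by
    split_ifs with h
    · exact congrArg y h.symm
    · rfl
  have e2 : (if i = k then y k else y i) = y i := by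
    split_ifs with h
    · exact congrArg y h.symm
    · rfl
  have e3 : (if j = k then y k else y j) = y j := by
    split_ifs with h
    · exact congrArg y h.symm
    · rfl
  have hne : (if i = k then y k else y i) * (if j = k then y k else y j) ≠ 0 := by
    rw [e2, e3]; exact mul_ne_zero (hy i).ne' (hy j).ne'
  have hd := (hasDerivAt_aux (A l i j) _ _ _ hu hv hw hne).deriv
  simp only [e1, e2, e3] at hd
  exact hd

lemma sum_C_eq (y : Fin 4 → ℝ) (hy : ∀ i, 0 < y i)
    (A : Fin 4 → Fin 4 → Fin 4 → ℝ)
    (C : Fin 4 → Fin 4 → Fin 4 → (Fin 4 → ℝ) → ℝ)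
    (hC : ∀ i j k z, C i j k z = A i j k * z i / (z j * z k))
    (l i j k : Fin 4) :
    ∑ m, (C m i j y * C l m k y - C m i k y * C l m j y)
      = (∑ m, (A m i j * A l m k - A m i k * A l m j)) * y l / (y i * (y j * y k)) := by
  rw [Finset.sum_mul, Finset.sum_div]
  refine Finset.sum_congr rfl fun m _ => ?_
  rw [hC, hC, hC, hC]
  have hi := (hy i).ne'
  have hj := (hy j).ne'
  have hk := (hy k).ne'
  have hm := (hy m).ne'
  field_simp

/-- The values of the curvature d-tensor `S^l_{ijk}` of the
rheonomic Berwald–Moór metric (ten cases, no summation over repeated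
indices). -/
theorem berwald_moor_S_values
    (y : Fin 4 → ℝ) (hy : ∀ i, 0 < y i)
    (A : Fin 4 → Fin 4 → Fin 4 → ℝ)
    (hA : ∀ i j k, A i j k =
      (2 * (if i = j then (1 : ℝ) else 0) + 2 * (if i = k then (1 : ℝ) else 0)
        + 2 * (if j = k then (1 : ℝ) else 0)
        - 8 * (if i = j then (1 : ℝ) else 0) * (if j = k then (1 : ℝ) else 0)
        - 1) / 8)
    (C : Fin 4 → Fin 4 → Fin 4 → (Fin 4 → ℝ) → ℝ)
    (hC : ∀ i j k z, C i j k z = A i j k * z i / (z j * z k))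
    (S : Fin 4 → Fin 4 → Fin 4 → Fin 4 → ℝ)
    (hS : ∀ l i j k, S l i j k =
      pd (C l i j) k y - pd (C l i k) j y
        + ∑ m, (C m i j y * C l m k y - C m i k y * C l m j y)) :
    (∀ l i j k, i ≠ j → i ≠ k → i ≠ l → j ≠ k → j ≠ l → k ≠ l →
      S l i j k = 0) ∧
    (∀ l i k, i ≠ k → k ≠ l → i ≠ l →
      S l i i k = -(1 / 16) * y l / ((y i) ^ 2 * y k)) ∧
    (∀ l i j, i ≠ j → j ≠ l → i ≠ l →
      S l i j i = (1 / 16) * y l / ((y i) ^ 2 * y j)) ∧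
    (∀ i j k, i ≠ j → j ≠ k → i ≠ k →
      S i i j k = 0) ∧
    (∀ l i k, i ≠ k → k ≠ l → i ≠ l →
      S l i l k = 1 / (16 * y i * y k)) ∧
    (∀ l i j, i ≠ j → j ≠ l → i ≠ l →
      S l i j l = -(1 / (16 * y i * y j))) ∧
    (∀ l i, i ≠ l → S l i i l = 1 / (8 * (y i) ^ 2)) ∧
    (∀ l i, i ≠ l → S l i l i = -(1 / (8 * (y i) ^ 2))) ∧
    (∀ l k, k ≠ l → S l l l k = 0) ∧
    (∀ l j, j ≠ l → S l l j l = 0) := by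
  have h0 : y 0 ≠ 0 := (hy 0).ne'
  have h1 : y 1 ≠ 0 := (hy 1).ne'
  have h2 : y 2 ≠ 0 := (hy 2).ne'
  have h3 : y 3 ≠ 0 := (hy 3).ne'
  refine ⟨?_, ?_, ?_, ?_, ?_, ?_, ?_, ?_, ?_, ?_⟩
  · intro l i j k hij hik hil hjk hjl hkl
    rcases fin4_cases l with rfl|rfl|rfl|rfl <;>
      rcases fin4_cases i with rfl|rfl|rfl|rfl <;>
      rcases fin4_cases j with rfl|rfl|rfl|rfl <;>
      rcases fin4_cases k with rfl|rfl|rfl|rfl <;>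
      first
        | exact absurd rfl hij | exact absurd rfl hik | exact absurd rfl hil
        | exact absurd rfl hjk | exact absurd rfl hjl | exact absurd rfl hkl
        | (rw [hS, pd_C_eq y hy A C hC, pd_C_eq y hy A C hC, sum_C_eq y hy A C hC,
             Fin.sum_univ_four]
           simp only [hA, Fin.reduceEq, reduceIte]
           norm_num
           all_goals field_simp
           all_goals ring)
  · intro l i k hik hkl hil
    rcases fin4_cases l with rfl|rfl|rfl|rfl <;>
      rcases fin4_cases i with rfl|rfl|rfl|rfl <;>
      rcases fin4_cases k with rfl|rfl|rfl|rfl <;>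
      first
        | exact absurd rfl hik | exact absurd rfl hkl | exact absurd rfl hil
        | (rw [hS, pd_C_eq y hy A C hC, pd_C_eq y hy A C hC, sum_C_eq y hy A C hC,
             Fin.sum_univ_four]
           simp only [hA, Fin.reduceEq, reduceIte]
           norm_num
           all_goals field_simp
           all_goals ring)
  · intro l i j hij hjl hil
    rcases fin4_cases l with rfl|rfl|rfl|rfl <;>
      rcases fin4_cases i with rfl|rfl|rfl|rfl <;>
      rcases fin4_cases j with rfl|rfl|rfl|rfl <;>
      first
        | exact absurd rfl hij | exact absurd rfl hjl | exact absurd rfl hil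
        | (rw [hS, pd_C_eq y hy A C hC, pd_C_eq y hy A C hC, sum_C_eq y hy A C hC,
             Fin.sum_univ_four]
           simp only [hA, Fin.reduceEq, reduceIte]
           norm_num
           all_goals field_simp
           all_goals ring)
  · intro i j k hij hjk hik
    rcases fin4_cases i with rfl|rfl|rfl|rfl <;>
      rcases fin4_cases j with rfl|rfl|rfl|rfl <;>
      rcases fin4_cases k with rfl|rfl|rfl|rfl <;>
      first
        | exact absurd rfl hij | exact absurd rfl hjk | exact absurd rfl hik
        | (rw [hS, pd_C_eq y hy A C hC, pd_C_eq y hy A C hC, sum_C_eq y hy A C hC,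
             Fin.sum_univ_four]
           simp only [hA, Fin.reduceEq, reduceIte]
           norm_num
           all_goals field_simp
           all_goals ring)
  · intro l i k hik hkl hil
    rcases fin4_cases l with rfl|rfl|rfl|rfl <;>
      rcases fin4_cases i with rfl|rfl|rfl|rfl <;>
      rcases fin4_cases k with rfl|rfl|rfl|rfl <;>
      first
        | exact absurd rfl hik | exact absurd rfl hkl | exact absurd rfl hil
        | (rw [hS, pd_C_eq y hy A C hC, pd_C_eq y hy A C hC, sum_C_eq y hy A C hC,
             Fin.sum_univ_four]
           simp only [hA, Fin.reduceEq, reduceIte]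
           norm_num
           all_goals field_simp
           all_goals ring)
  · intro l i j hij hjl hil
    rcases fin4_cases l with rfl|rfl|rfl|rfl <;>
      rcases fin4_cases i with rfl|rfl|rfl|rfl <;>
      rcases fin4_cases j with rfl|rfl|rfl|rfl <;>
      first
        | exact absurd rfl hij | exact absurd rfl hjl | exact absurd rfl hil
        | (rw [hS, pd_C_eq y hy A C hC, pd_C_eq y hy A C hC, sum_C_eq y hy A C hC,
             Fin.sum_univ_four]
           simp only [hA, Fin.reduceEq, reduceIte]
           norm_num
           all_goals field_simp
           all_goals ring)
  · intro l i hil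
    rcases fin4_cases l with rfl|rfl|rfl|rfl <;>
      rcases fin4_cases i with rfl|rfl|rfl|rfl <;>
      first
        | exact absurd rfl hil
        | (rw [hS, pd_C_eq y hy A C hC, pd_C_eq y hy A C hC, sum_C_eq y hy A C hC,
             Fin.sum_univ_four]
           simp only [hA, Fin.reduceEq, reduceIte]
           norm_num
           all_goals field_simp
           all_goals ring)
  · intro l i hil
    rcases fin4_cases l with rfl|rfl|rfl|rfl <;>
      rcases fin4_cases i with rfl|rfl|rfl|rfl <;>
      first
        | exact absurd rfl hil
        | (rw [hS, pd_C_eq y hy A C hC, pd_C_eq y hy A C hC, sum_C_eq y hy A C hC,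
             Fin.sum_univ_four]
           simp only [hA, Fin.reduceEq, reduceIte]
           norm_num
           all_goals field_simp
           all_goals ring)
  · intro l k hkl
    rcases fin4_cases l with rfl|rfl|rfl|rfl <;>
      rcases fin4_cases k with rfl|rfl|rfl|rfl <;>
      first
        | exact absurd rfl hkl
        | (rw [hS, pd_C_eq y hy A C hC, pd_C_eq y hy A C hC, sum_C_eq y hy A C hC,
             Fin.sum_univ_four]
           simp only [hA, Fin.reduceEq, reduceIte]
           norm_num
           all_goals field_simp
           all_goals ring)
  · intro l j hjl
    rcases fin4_cases l with rfl|rfl|rfl|rfl <;>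
      rcases fin4_cases j with rfl|rfl|rfl|rfl <;>
      first
        | exact absurd rfl hjl
        | (rw [hS, pd_C_eq y hy A C hC, pd_C_eq y hy A C hC, sum_C_eq y hy A C hC,
             Fin.sum_univ_four]
           simp only [hA, Fin.reduceEq, reduceIte]
           norm_num
           all_goals field_simp
           all_goals ring)
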